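/- arXiv:2209.09314 — 7 statements merged into one kernel-verified Lean document; each statement's English description precedes it below -/
import Mathlib

section
/- Let V be a Banach space, V_n ⊆ V a subset, and ℓ : V → ℝ^m a map. Suppose there exist constants α, μ > 0 and a norm ‖·‖_Z on ℝ^m such that ‖ℓ(v)−ℓ(w)‖_Z ≤ α‖v−w‖_V for all v,w ∈ V, and ‖v−w‖_V ≤ μ‖ℓ(v)−ℓ(w)‖_Z for all v,w ∈ V_n. Let u ∈ V, η ∈ ℝ^m, z = ℓ(u)+η, and let ũ ∈ V_n minimize v ↦ ‖z−ℓ(v)‖_Z over V_n. Then ‖u−ũ‖_V ≤ (1+2αμ)·inf_{v∈V_n}‖u−v‖_V + 2μ‖η‖_Z. -/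
/-- **Best fit estimator recovery bound** (Theorem 2.1).
`V` Banach space, `Vn ⊆ V` arbitrary subset, `ℓ : V → ℝ^m` possibly nonlinear,
`Z` a norm on `ℝ^m`; if `ℓ` is `α`-Lipschitz on `V` (in `Z`) and `μ`-inverse stable on `Vn`,
and `ut ∈ Vn` is a best fit to `z = ℓ u + η`, then
`‖u - ut‖ ≤ (1 + 2αμ)·inf_{v ∈ Vn} ‖u - v‖ + 2μ‖η‖_Z`. -/
theorem best_fit_recovery
    {V : Type*} [NormedAddCommGroup V] [NormedSpace ℝ V] [CompleteSpace V]
    {m : ℕ} (Vn : Set V) (ℓ : V → (Fin m → ℝ))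
    (Z : (Fin m → ℝ) → ℝ)
    (hZadd : ∀ x y, Z (x + y) ≤ Z x + Z y)
    (hZsmul : ∀ (a : ℝ) x, Z (a • x) = |a| * Z x)
    (hZdef : ∀ x, Z x = 0 ↔ x = 0)
    (α μ : ℝ) (hα : 0 < α) (hμ : 0 < μ)
    (hstab : ∀ v w : V, Z (ℓ v - ℓ w) ≤ α * ‖v - w‖)
    (hinvstab : ∀ v ∈ Vn, ∀ w ∈ Vn, ‖v - w‖ ≤ μ * Z (ℓ v - ℓ w))
    (u : V) (η : Fin m → ℝ) (z : Fin m → ℝ) (hz : z = ℓ u + η)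
    (ut : V) (hutmem : ut ∈ Vn)
    (hutmin : ∀ v ∈ Vn, Z (z - ℓ ut) ≤ Z (z - ℓ v)) :
    ‖u - ut‖ ≤ (1 + 2 * α * μ) * (⨅ v : Vn, ‖u - (v : V)‖) + 2 * μ * Z η := by
  have hZneg : ∀ x, Z (-x) = Z x := by
    intro x
    have := hZsmul (-1) x
    simpa using this
  -- key pointwise bound
  have key : ∀ v ∈ Vn, ‖u - ut‖ ≤ (1 + 2 * α * μ) * ‖u - v‖ + 2 * μ * Z η := by
    intro v hv
    have h1 : ‖u - ut‖ ≤ ‖u - v‖ + ‖v - ut‖ := by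
      have := norm_add_le (u - v) (v - ut)
      simpa using this
    have h2 : ‖v - ut‖ ≤ μ * Z (ℓ v - ℓ ut) := hinvstab v hv ut hutmem
    have h3 : Z (ℓ v - ℓ ut) ≤ Z (ℓ v - z) + Z (z - ℓ ut) := by
      have := hZadd (ℓ v - z) (z - ℓ ut)
      simpa using this
    have h4 : Z (z - ℓ ut) ≤ Z (z - ℓ v) := hutmin v hv
    have h5 : Z (ℓ v - z) = Z (z - ℓ v) := by
      rw [← hZneg (z - ℓ v)]; ring_nf
    have h6 : Z (z - ℓ v) ≤ Z (ℓ u - ℓ v) + Z η := by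
      have := hZadd (ℓ u - ℓ v) η
      have e : z - ℓ v = (ℓ u - ℓ v) + η := by rw [hz]; ring
      rw [e]; exact this
    have h7 : Z (ℓ u - ℓ v) ≤ α * ‖u - v‖ := hstab u v
    nlinarith [h1, h2, h3, h4, h5, h6, h7, hμ.le]
  -- pass to infimum
  have hne : Nonempty Vn := ⟨⟨ut, hutmem⟩⟩
  have hpos : (0:ℝ) < 1 + 2 * α * μ := by nlinarith
  have hinf : (‖u - ut‖ - 2 * μ * Z η) / (1 + 2 * α * μ) ≤ ⨅ v : Vn, ‖u - (v : V)‖ := by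
    apply le_ciInf
    intro v
    rw [div_le_iff₀ hpos]
    have := key v v.2
    linarith [this, mul_comm ‖u - (v:V)‖ (1 + 2 * α * μ)]
  have := (div_le_iff₀ hpos).mp hinf
  linarith [mul_comm (⨅ v : Vn, ‖u - (v : V)‖) (1 + 2 * α * μ), this]
end

section
/- Let V be a Banach space, V_n ⊆ V, ℓ : V → ℝ^m as above with stability constant α_Z and inverse stability constant μ_Z with respect to a norm ‖·‖_Z on ℝ^m, and let β_Z = max_{z≠0} ‖z‖_Z/‖z‖_p for a fixed ℓ^p norm on ℝ^m. If ũ ∈ V_n is a C-near minimizer of ‖z−ℓ(v)‖_Z over V_n (i.e., ‖z−ℓ(ũ)‖_Z ≤ C‖z−ℓ(v)‖_Z for all v ∈ V_n, C ≥ 1), then ‖u−ũ‖_V ≤ (1+(1+C)α_Z μ_Z)·inf_{v∈V_n}‖u−v‖_V + (1+C)β_Z μ_Z ‖η‖_p. -/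
open scoped BigOperators

/-- The `ℓ^p` norm on `ℝ^m` for `1 ≤ p < ∞`. -/
noncomputable def lpNorm {m : ℕ} (p : ℝ) (x : Fin m → ℝ) : ℝ :=
    (∑ i, |x i| ^ p) ^ (1 / p)

/-- **Near-best-fit estimator recovery bound**: if `ut ∈ Vn` is a `C`-near minimizer of
`v ↦ ‖z - ℓ v‖_Z` over `Vn`, with stability constant `α`, inverse stability constant `μ`
and `β` bounding the ratio of the `Z` norm to the `ℓ^p` norm, then
`‖u - ut‖ ≤ (1 + (1+C)αμ)·inf_{v∈Vn}‖u - v‖ + (1+C)βμ‖η‖_p`. -/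
theorem near_best_fit_recovery
    {V : Type*} [NormedAddCommGroup V] [NormedSpace ℝ V] [CompleteSpace V]
    {m : ℕ} (Vn : Set V) (ℓ : V → (Fin m → ℝ))
    (Z : (Fin m → ℝ) → ℝ)
    (hZadd : ∀ x y, Z (x + y) ≤ Z x + Z y)
    (hZsmul : ∀ (a : ℝ) x, Z (a • x) = |a| * Z x)
    (hZdef : ∀ x, Z x = 0 ↔ x = 0)
    (p : ℝ) (hp : 1 ≤ p)
    (α μ β : ℝ) (hα : 0 < α) (hμ : 0 < μ) (hβ : 0 < β)
    (hstab : ∀ v w : V, Z (ℓ v - ℓ w) ≤ α * ‖v - w‖)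
    (hinvstab : ∀ v ∈ Vn, ∀ w ∈ Vn, ‖v - w‖ ≤ μ * Z (ℓ v - ℓ w))
    (hβZ : ∀ x, Z x ≤ β * lpNorm p x)
    (u : V) (η : Fin m → ℝ) (z : Fin m → ℝ) (hz : z = ℓ u + η)
    (C : ℝ) (hC : 1 ≤ C)
    (ut : V) (hutmem : ut ∈ Vn)
    (hutmin : ∀ v ∈ Vn, Z (z - ℓ ut) ≤ C * Z (z - ℓ v)) :
    ‖u - ut‖ ≤ (1 + (1 + C) * α * μ) * (⨅ v : Vn, ‖u - (v : V)‖)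
      + (1 + C) * β * μ * lpNorm p η := by
  set c : ℝ := 1 + (1 + C) * α * μ with hc
  set d : ℝ := (1 + C) * β * μ * lpNorm p η with hd
  have hcpos : 0 < c := by
    have : 0 ≤ (1 + C) * α * μ := by positivity
    linarith
  have hZnonneg : ∀ x, 0 ≤ Z x := by
    intro x
    have h0 : Z 0 = 0 := (hZdef 0).mpr rfl
    have hneg : Z (-x) = Z x := by
      have := hZsmul (-1) x
      simpa using this
    have := hZadd x (-x)
    simp [h0] at this
    linarith
  have key : ∀ v : Vn, ‖u - ut‖ ≤ c * ‖u - (v : V)‖ + d := by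
    rintro ⟨v, hv⟩
    simp only
    have h1 : ‖u - ut‖ ≤ ‖u - v‖ + ‖v - ut‖ := by
      have := norm_add_le (u - v) (v - ut)
      simpa using this
    have h2 : ‖v - ut‖ ≤ μ * Z (ℓ v - ℓ ut) := hinvstab v hv ut hutmem
    have h3 : Z (ℓ v - ℓ ut) ≤ Z (ℓ v - z) + Z (z - ℓ ut) := by
      have := hZadd (ℓ v - z) (z - ℓ ut)
      simpa using this
    have h4 : Z (ℓ v - z) = Z (z - ℓ v) := by
      have := hZsmul (-1) (z - ℓ v)
      simpa [neg_sub] using this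
    have h5 : Z (z - ℓ ut) ≤ C * Z (z - ℓ v) := hutmin v hv
    have h6 : Z (z - ℓ v) ≤ α * ‖u - v‖ + β * lpNorm p η := by
      have heq : z - ℓ v = (ℓ u - ℓ v) + η := by rw [hz]; abel
      calc Z (z - ℓ v) = Z ((ℓ u - ℓ v) + η) := by rw [heq]
        _ ≤ Z (ℓ u - ℓ v) + Z η := hZadd _ _
        _ ≤ α * ‖u - v‖ + β * lpNorm p η := add_le_add (hstab u v) (hβZ η)
    have h7 : Z (ℓ v - ℓ ut) ≤ (1 + C) * Z (z - ℓ v) := by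
      rw [h4] at h3; linarith
    have h8 : μ * Z (ℓ v - ℓ ut) ≤ μ * ((1 + C) * (α * ‖u - v‖ + β * lpNorm p η)) := by
      apply mul_le_mul_of_nonneg_left _ hμ.le
      exact h7.trans (mul_le_mul_of_nonneg_left h6 (by linarith))
    rw [hc, hd]
    nlinarith [h1, h2, h8]
  have hbdd : ∀ v : Vn, (‖u - ut‖ - d) / c ≤ ‖u - (v : V)‖ := by
    intro v
    rw [div_le_iff₀ hcpos]
    have := key v
    nlinarith [key v]
  haveI : Nonempty ↑Vn := ⟨⟨ut, hutmem⟩⟩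
  have hinf : (‖u - ut‖ - d) / c ≤ ⨅ v : Vn, ‖u - (v : V)‖ :=
    le_ciInf hbdd
  rw [div_le_iff₀ hcpos] at hinf
  nlinarith [hinf]
end

section
/- Let V be a Banach space, ℓ : V → ℝ^m surjective linear with quotient norm ‖z‖_W = min{‖v‖_V : ℓ(v)=z} attained, V_n ⊆ V with inverse stability constant μ_W = sup{‖v‖_V/‖ℓ(v)‖_W : v ∈ V_n−V_n}. Let u ∈ V, η ∈ ℝ^m, z = ℓ(u)+η, and let u* minimize v ↦ dist(v, V_n)_V over {v : ℓ(v) = z}. Then ‖u−u*‖_V ≤ (2+2μ_W)·inf_{v∈V_n}‖u−v‖_V + (1+2μ_W)‖η‖_W. -/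
/-- **Generalized interpolation estimator recovery bound** (Theorem 3.2).
`ℓ : V → ℝ^m` surjective linear, `W` the (attained) quotient norm, `μW` an inverse
stability constant on `Vn - Vn` for the `W` norm, and `ustar` a minimizer of
`v ↦ dist(v, Vn)` over `{v : ℓ v = z}` where `z = ℓ u + η`.  Then
`‖u - ustar‖ ≤ (2 + 2μW)·inf_{v∈Vn}‖u - v‖ + (1 + 2μW)·‖η‖_W`. -/
theorem generalized_interpolation_recovery
    {V : Type*} [NormedAddCommGroup V] [NormedSpace ℝ V] [CompleteSpace V]
    {m : ℕ} (ℓ : V →L[ℝ] (Fin m → ℝ)) (hsurj : Function.Surjective ℓ)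
    (W : (Fin m → ℝ) → ℝ)
    (hW : ∀ z : Fin m → ℝ, W z = sInf {r : ℝ | ∃ v : V, ℓ v = z ∧ ‖v‖ = r})
    (hWattained : ∀ z : Fin m → ℝ, ∃ v : V, ℓ v = z ∧ ‖v‖ = W z)
    (Vn : Set V) (hVn : Vn.Nonempty)
    (μW : ℝ) (hμWpos : 0 < μW)
    (hμW : ∀ v₁ ∈ Vn, ∀ v₂ ∈ Vn, ‖v₁ - v₂‖ ≤ μW * W (ℓ (v₁ - v₂)))
    (u : V) (η : Fin m → ℝ) (z : Fin m → ℝ) (hz : z = ℓ u + η)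
    (ustar : V) (hustar_data : ℓ ustar = z)
    (hustar_min : ∀ v : V, ℓ v = z →
      Metric.infDist ustar Vn ≤ Metric.infDist v Vn) :
    ‖u - ustar‖ ≤ (2 + 2 * μW) * (⨅ v : Vn, ‖u - (v : V)‖) + (1 + 2 * μW) * W η := by
  set e := Metric.infDist u Vn with he
  have hiInf : (⨅ v : Vn, ‖u - (v : V)‖) = e := by
    rw [he, Metric.infDist_eq_iInf]
    congr 1; ext v; rw [dist_eq_norm]
  obtain ⟨vη, hvηℓ, hvηnorm⟩ := hWattained η
  have hw0 : 0 ≤ W η := hvηnorm ▸ norm_nonneg _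
  have hWle : ∀ y : V, W (ℓ y) ≤ ‖y‖ := by
    intro y
    rw [hW]
    refine csInf_le ⟨0, ?_⟩ ⟨y, rfl, rfl⟩
    rintro r ⟨v, -, hv⟩
    exact hv ▸ norm_nonneg v
  have hstar : Metric.infDist ustar Vn ≤ e + W η := by
    have h1 : ℓ (u + vη) = z := by rw [map_add, hvηℓ, hz]
    calc Metric.infDist ustar Vn ≤ Metric.infDist (u + vη) Vn := hustar_min _ h1
      _ ≤ Metric.infDist u Vn + dist (u + vη) u := Metric.infDist_le_infDist_add_dist
      _ = e + W η := by rw [dist_eq_norm, add_sub_cancel_left, hvηnorm, he]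
  have he0 : 0 ≤ e := Metric.infDist_nonneg
  rw [hiInf]
  refine le_of_forall_pos_le_add fun ε hε => ?_
  have hden : (0:ℝ) < 2 + 2 * μW := by linarith
  set ε' := ε / (2 + 2 * μW) with hε'
  have hε'pos : 0 < ε' := div_pos hε hden
  obtain ⟨vn, hvnVn, hvn⟩ :=
    (Metric.infDist_lt_iff hVn).mp (show Metric.infDist u Vn < e + ε' by rw [← he]; linarith)
  obtain ⟨vn', hvn'Vn, hvn'⟩ :=
    (Metric.infDist_lt_iff hVn).mp
      (show Metric.infDist ustar Vn < e + W η + ε' by linarith)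
  have hℓeq : ℓ ((vn - u) - (vn' - ustar) - vη) = ℓ (vn - vn') := by
    simp only [map_sub, hvηℓ, hustar_data, hz]
    abel
  have hWbound : W (ℓ (vn - vn')) ≤ 2 * e + 2 * W η + 2 * ε' := by
    have h1 : ‖vn - u‖ < e + ε' := by rwa [← norm_sub_rev, ← dist_eq_norm]
    have h2 : ‖vn' - ustar‖ < e + W η + ε' := by rwa [← norm_sub_rev, ← dist_eq_norm]
    calc W (ℓ (vn - vn')) = W (ℓ ((vn - u) - (vn' - ustar) - vη)) := by rw [hℓeq]
      _ ≤ ‖(vn - u) - (vn' - ustar) - vη‖ := hWle _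
      _ ≤ ‖(vn - u) - (vn' - ustar)‖ + ‖vη‖ := norm_sub_le _ _
      _ ≤ ‖vn - u‖ + ‖vn' - ustar‖ + ‖vη‖ := by
          have := norm_sub_le (vn - u) (vn' - ustar); linarith
      _ ≤ 2 * e + 2 * W η + 2 * ε' := by rw [hvηnorm]; linarith
  have h3 : ‖vn - vn'‖ ≤ μW * (2 * e + 2 * W η + 2 * ε') :=
    le_trans (hμW vn hvnVn vn' hvn'Vn)
      (mul_le_mul_of_nonneg_left hWbound hμWpos.le)
  have htri : ‖u - ustar‖ ≤ dist u vn + ‖vn - vn'‖ + dist ustar vn' := by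
    rw [← dist_eq_norm, ← dist_eq_norm]
    calc dist u ustar ≤ dist u vn' + dist vn' ustar := dist_triangle _ _ _
      _ ≤ (dist u vn + dist vn vn') + dist vn' ustar := by
          have := dist_triangle u vn vn'; linarith
      _ = dist u vn + dist vn vn' + dist ustar vn' := by rw [dist_comm vn' ustar]
  have hεeq : ε = (2 + 2 * μW) * ε' := by
    rw [hε', mul_div_cancel₀ _ hden.ne']
  have hkey : (2 + 2 * μW) * e + (1 + 2 * μW) * W η + (2 + 2 * μW) * ε'
      = (e + ε') + μW * (2 * e + 2 * W η + 2 * ε') + (e + W η + ε') := by ring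
  rw [hεeq]
  linarith
end

section
/- Let u = χ_Ω ∈ F_{s,R,M} with R ≥ (3/√2)h, T a cell of side h with 3×3 stencil S contained in [0,1]², and V₂ the set of all half-plane indicators. Then inf_{v∈V₂} ‖u − v‖_{L¹(S)} ≤ M (3√2 h)^{min(s,2)+1}. -/
set_option maxHeartbeats 1000000

open MeasureTheory
open scoped RealInnerProductSpace BigOperators

noncomputable section

abbrev Plane := EuclideanSpace ℝ (Fin 2)

def HolderBound (s R M : ℝ) (ψ : ℝ → ℝ) : Prop :=
  ContDiffOn ℝ (⌈s⌉₊ - 1 : ℕ) ψ (Set.Icc (-R) R) ∧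
  (∀ j : ℕ, j ≤ ⌈s⌉₊ - 1 → ∀ t ∈ Set.Icc (-R) R,
    |iteratedDerivWithin j ψ (Set.Icc (-R) R) t| ≤ M) ∧
  (∀ a ∈ Set.Icc (-R) R, ∀ b ∈ Set.Icc (-R) R,
    |iteratedDerivWithin (⌈s⌉₊ - 1) ψ (Set.Icc (-R) R) a -
      iteratedDerivWithin (⌈s⌉₊ - 1) ψ (Set.Icc (-R) R) b|
        ≤ M * |a - b| ^ (s - (⌈s⌉₊ - 1 : ℕ) : ℝ))

def unitSquare : Set Plane := {x | ∀ i, x i ∈ Set.Icc (0 : ℝ) 1}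

def MemF (s R M : ℝ) (Ω : Set Plane) : Prop :=
  (∀ y ∈ Ω, ∀ i, y i ∈ Set.Icc R (1 - R)) ∧
  ∀ x ∈ unitSquare, ∃ e₁ e₂ : Plane, ⟪e₁, e₂⟫ = 0 ∧ ‖e₁‖ = 1 ∧ ‖e₂‖ = 1 ∧
    ∃ ψ : ℝ → ℝ, HolderBound s R M ψ ∧
      ∀ z₁ z₂ : ℝ, |z₁| ≤ R → |z₂| ≤ R →
        ((x + z₁ • e₁ + z₂ • e₂) ∈ Ω ↔ z₂ ≤ ψ z₁)

/-- The 3×3 stencil `S` of side `3h` centered at `xb`. -/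
def stencil (h : ℝ) (xb : Plane) : Set Plane :=
  {y : Plane | |y 0 - xb 0| ≤ 3 * h / 2 ∧ |y 1 - xb 1| ≤ 3 * h / 2}

/-- The indicator function of the half-plane `{x : n⃗ · (x - xb) ≥ c}`. -/
def halfPlaneInd (xb : Plane) (nv : Plane) (c : ℝ) : Plane → ℝ :=
  Set.indicator {y : Plane | c ≤ nv 0 * (y 0 - xb 0) + nv 1 * (y 1 - xb 1)} fun _ => (1 : ℝ)

/-! ### Auxiliary lemmas -/

/-- Orthonormal basis of the plane from an orthonormal pair. -/
def pairONB (e₁ e₂ : Plane) (h12 : ⟪e₁, e₂⟫ = 0) (h1 : ‖e₁‖ = 1) (h2 : ‖e₂‖ = 1) :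
    OrthonormalBasis (Fin 2) ℝ Plane :=
  have i11 : ⟪e₁, e₁⟫ = 1 := by rw [real_inner_self_eq_norm_sq, h1]; norm_num
  have i22 : ⟪e₂, e₂⟫ = 1 := by rw [real_inner_self_eq_norm_sq, h2]; norm_num
  have i21 : ⟪e₂, e₁⟫ = 0 := by rw [real_inner_comm]; exact h12
  have horth : Orthonormal ℝ ![e₁, e₂] := by
    rw [orthonormal_iff_ite]
    intro i j
    fin_cases i <;> fin_cases j
    · simpa using i11
    · simpa using h12
    · simpa using i21
    · simpa using i22
  (basisOfOrthonormalOfCardEqFinrank horth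
      (by simp [finrank_euclideanSpace_fin])).toOrthonormalBasis
    (by rwa [coe_basisOfOrthonormalOfCardEqFinrank])

lemma pairONB_apply_zero (e₁ e₂ : Plane) (h12 : ⟪e₁, e₂⟫ = 0) (h1 : ‖e₁‖ = 1) (h2 : ‖e₂‖ = 1) :
    pairONB e₁ e₂ h12 h1 h2 0 = e₁ := by
  simp [pairONB, Module.Basis.coe_toOrthonormalBasis, coe_basisOfOrthonormalOfCardEqFinrank]

lemma pairONB_apply_one (e₁ e₂ : Plane) (h12 : ⟪e₁, e₂⟫ = 0) (h1 : ‖e₁‖ = 1) (h2 : ‖e₂‖ = 1) :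
    pairONB e₁ e₂ h12 h1 h2 1 = e₂ := by
  simp [pairONB, Module.Basis.coe_toOrthonormalBasis, coe_basisOfOrthonormalOfCardEqFinrank]

/-- Volume of a rotated box in the plane. -/
lemma volume_box (b : OrthonormalBasis (Fin 2) ℝ Plane) (xb : Plane) (a₀ b₀ a₁ b₁ : ℝ) :
    volume {y : Plane | ⟪b 0, y - xb⟫ ∈ Set.Icc a₀ b₀ ∧ ⟪b 1, y - xb⟫ ∈ Set.Icc a₁ b₁}
      = ENNReal.ofReal (b₀ - a₀) * ENNReal.ofReal (b₁ - a₁) := by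
  have hpi : MeasurableSet (Set.univ.pi fun i : Fin 2 => Set.Icc (![a₀, a₁] i) (![b₀, b₁] i)) :=
    MeasurableSet.univ_pi fun i => measurableSet_Icc
  have key : ∀ (v : Plane) (i : Fin 2),
      (MeasurableEquiv.toLp 2 (Fin 2 → ℝ)).symm (b.repr v) i = ⟪b i, v⟫ := fun v i =>
    b.repr_apply_apply v i
  have hset : {y : Plane | ⟪b 0, y - xb⟫ ∈ Set.Icc a₀ b₀ ∧ ⟪b 1, y - xb⟫ ∈ Set.Icc a₁ b₁}
      = (fun y : Plane => y + (-xb)) ⁻¹' (⇑b.repr ⁻¹'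
          ((MeasurableEquiv.toLp 2 (Fin 2 → ℝ)).symm ⁻¹'
            (Set.univ.pi fun i : Fin 2 => Set.Icc (![a₀, a₁] i) (![b₀, b₁] i)))) := by
    ext y
    simp only [Set.mem_setOf_eq, Set.mem_preimage, Set.mem_pi, Set.mem_univ, forall_true_left,
      Fin.forall_fin_two, Matrix.cons_val_zero, Matrix.cons_val_one, Matrix.head_cons, key,
      ← sub_eq_add_neg]
  rw [hset]
  rw [measure_preimage_add_right]
  rw [b.measurePreserving_repr.measure_preimage
    (((EuclideanSpace.volume_preserving_symm_measurableEquiv_toLp (Fin 2)).measurable hpi)).nullMeasurableSet]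
  rw [(EuclideanSpace.volume_preserving_symm_measurableEquiv_toLp (Fin 2)).measure_preimage
    hpi.nullMeasurableSet]
  rw [volume_pi_pi]
  simp [Fin.prod_univ_two, Real.volume_Icc]

lemma measurableSet_innerSlab (v xb : Plane) (A : Set ℝ) (hA : MeasurableSet A) :
    MeasurableSet {y : Plane | ⟪v, y - xb⟫ ∈ A} := by
  have hc : Continuous fun y : Plane => ⟪v, y - xb⟫ :=
    continuous_const.inner (continuous_id.sub continuous_const)
  exact hc.measurable hA

lemma sqrt_two_mul_aux (h : ℝ) : 3 * Real.sqrt 2 * h = 2 * (3 / Real.sqrt 2 * h) := by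
  have hs : Real.sqrt 2 * Real.sqrt 2 = 2 := Real.mul_self_sqrt (by norm_num)
  have hpos : (0:ℝ) < Real.sqrt 2 := Real.sqrt_pos.mpr (by norm_num)
  have h6 : (6:ℝ) / Real.sqrt 2 = 3 * Real.sqrt 2 := by
    rw [div_eq_iff (ne_of_gt hpos)]
    linear_combination -3 * hs
  calc 3 * Real.sqrt 2 * h = 6 / Real.sqrt 2 * h := by rw [h6]
    _ = 2 * (3 / Real.sqrt 2 * h) := by ring

lemma one_le_sqrt_one_add_sq (D : ℝ) : 1 ≤ Real.sqrt (1 + D ^ 2) := by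
  have h2 : (1:ℝ) ≤ 1 + D ^ 2 := by nlinarith [sq_nonneg D]
  calc (1:ℝ) = Real.sqrt 1 := Real.sqrt_one.symm
    _ ≤ _ := Real.sqrt_le_sqrt h2

lemma abs_between (x p q κ : ℝ) (h3 : |p - q| ≤ κ)
    (hc : (q < x ∧ x ≤ p) ∨ (p < x ∧ x ≤ q)) : |x - q| ≤ κ := by
  have h4 := abs_le.mp h3
  rw [abs_le]
  rcases hc with ⟨ha, hb⟩ | ⟨ha, hb⟩ <;> constructor <;> linarith [h4.1, h4.2]

lemma slab_shift (Winv κ ψ0 D z₁ z₂ : ℝ) (hW0 : 0 < Winv) (hW1 : Winv ≤ 1)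
    (hκ : 0 ≤ κ) (hslab : |z₂ - (ψ0 + D * z₁)| ≤ κ) :
    Winv * (-ψ0) - κ ≤ Winv * (D * z₁ - z₂) ∧ Winv * (D * z₁ - z₂) ≤ Winv * (-ψ0) + κ := by
  have key : |Winv * (D * z₁ - z₂) - Winv * (-ψ0)| ≤ κ := by
    have e : Winv * (D * z₁ - z₂) - Winv * (-ψ0) = -(Winv * (z₂ - (ψ0 + D * z₁))) := by ring
    rw [e, abs_neg, abs_mul, abs_of_pos hW0]
    calc Winv * |z₂ - (ψ0 + D * z₁)| ≤ 1 * κ :=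
        mul_le_mul hW1 hslab (abs_nonneg _) (by linarith)
      _ = κ := one_mul κ
  have hk := abs_le.mp key
  constructor <;> linarith [hk.1, hk.2]

/-- Taylor-type affine approximation from `HolderBound`. -/
lemma affine_approx (s R M : ℝ) (hs : 1 ≤ s) (hM : 0 < M) (ψ : ℝ → ℝ)
    (hψ : HolderBound s R M ψ) (ρ : ℝ) (hρ : 0 < ρ) (hρR : ρ ≤ R) :
    ∃ D : ℝ, ∀ z ∈ Set.Icc (-ρ) ρ, |ψ z - (ψ 0 + D * z)| ≤ M * ρ ^ (min s 2) := by
  obtain ⟨hsm, hbd, hhol⟩ := hψ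
  have hRpos : 0 < R := lt_of_lt_of_le hρ hρR
  set I := Set.Icc (-R) R with hI
  have hIu : UniqueDiffOn ℝ I := uniqueDiffOn_Icc (by linarith)
  have hsub : Set.Icc (-ρ) ρ ⊆ I := Set.Icc_subset_Icc (by linarith) hρR
  have h0I : (0 : ℝ) ∈ I := ⟨by linarith, by linarith⟩
  have habs : ∀ z ∈ Set.Icc (-ρ) ρ, |z| ≤ ρ := fun z hz => abs_le.2 ⟨hz.1, hz.2⟩
  rcases le_or_gt (⌈s⌉₊ : ℝ) 1 with hc | hc
  · -- s = 1
    have hs1 : s = 1 := le_antisymm (le_trans (Nat.le_ceil s) hc) hs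
    have hmin : min s 2 = 1 := by rw [hs1]; norm_num
    have hn0 : ⌈s⌉₊ - 1 = 0 := by
      have : ⌈s⌉₊ = 1 := by rw [hs1]; simp
      omega
    refine ⟨0, fun z hz => ?_⟩
    have := hhol z (hsub hz) 0 h0I
    rw [hn0] at this
    simp only [iteratedDerivWithin_zero, Nat.cast_zero, sub_zero] at this
    have h1 : |ψ z - ψ 0| ≤ M * |z| ^ s := this
    rw [hs1] at h1
    rw [hmin]
    calc |ψ z - (ψ 0 + 0 * z)| = |ψ z - ψ 0| := by ring_nf
      _ ≤ M * |z| ^ (1 : ℝ) := h1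
      _ ≤ M * ρ ^ (1 : ℝ) := by
          rw [Real.rpow_one, Real.rpow_one]
          exact mul_le_mul_of_nonneg_left (habs z hz) hM.le
  · -- s > 1
    have hn1 : 1 ≤ ⌈s⌉₊ - 1 := by
      have : 1 < ⌈s⌉₊ := by exact_mod_cast hc
      omega
    have hdiff : DifferentiableOn ℝ ψ I :=
      hsm.differentiableOn (by exact_mod_cast (show ⌈s⌉₊ - 1 ≠ 0 by omega))
    set D := derivWithin ψ I 0 with hD
    set σ := min s 2 - 1 with hσ
    have hσ0 : 0 ≤ σ := by
      have h2 : 1 < s := by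
        have hnat : 1 < ⌈s⌉₊ := by exact_mod_cast hc
        exact_mod_cast Nat.lt_ceil.mp hnat
      simp only [hσ, sub_nonneg, le_min_iff]
      constructor <;> linarith
    have hkey : ∀ t ∈ Set.Icc (-ρ) ρ, |derivWithin ψ I t - D| ≤ M * ρ ^ σ := by
      rcases le_or_gt s 2 with hs2 | hs2
      · -- 1 < s ≤ 2, ⌈s⌉₊ = 2
        have hceil : ⌈s⌉₊ = 2 := by
          have h1 : 1 < ⌈s⌉₊ := by exact_mod_cast hc
          have := Nat.ceil_le.mpr (show s ≤ ((2:ℕ):ℝ) by exact_mod_cast hs2)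
          omega
        have hn : ⌈s⌉₊ - 1 = 1 := by omega
        intro t ht
        have := hhol t (hsub ht) 0 h0I
        rw [hn] at this
        have h1 : |derivWithin ψ I t - derivWithin ψ I 0|
            ≤ M * |t - 0| ^ (s - 1 : ℝ) := by
          have e1 : iteratedDerivWithin 1 ψ I t = derivWithin ψ I t :=
            congrFun iteratedDerivWithin_one t
          have e2 : iteratedDerivWithin 1 ψ I 0 = derivWithin ψ I 0 :=
            congrFun iteratedDerivWithin_one 0
          rw [e1, e2] at this
          simpa using this
        have hσval : σ = s - 1 := by
          simp only [hσ, min_eq_left hs2]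
        rw [hσval]
        refine le_trans h1 ?_
        rw [sub_zero]
        exact mul_le_mul_of_nonneg_left
          (Real.rpow_le_rpow (abs_nonneg t) (habs t ht) (by linarith)) hM.le
      · -- s > 2
        have hceil : 3 ≤ ⌈s⌉₊ := by
          have h1 : (2:ℝ) < ⌈s⌉₊ := lt_of_lt_of_le hs2 (Nat.le_ceil s)
          have h2 : 2 < ⌈s⌉₊ := by exact_mod_cast h1
          omega
        have hn2 : 2 ≤ ⌈s⌉₊ - 1 := by omega
        have hg : ContDiffOn ℝ 1 (derivWithin ψ I) I := by
          refine hsm.derivWithin hIu ?_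
          exact_mod_cast (by exact_mod_cast hn2 : (2:ℕ∞) ≤ (⌈s⌉₊ - 1 : ℕ))
        have hgd : DifferentiableOn ℝ (derivWithin ψ I) I := hg.differentiableOn one_ne_zero
        have hbound : ∀ x ∈ I, ‖derivWithin (derivWithin ψ I) I x‖ ≤ M := by
          intro x hx
          have e : iteratedDerivWithin 2 ψ I x = derivWithin (derivWithin ψ I) I x := by
            rw [iteratedDerivWithin_succ]
            apply derivWithin_congr
            · intro t htI
              exact congrFun iteratedDerivWithin_one t
            · exact congrFun iteratedDerivWithin_one x
          have := hbd 2 hn2 x hx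
          rw [e] at this
          simpa using this
        intro t ht
        have hlip := (convex_Icc (-R) R).norm_image_sub_le_of_norm_hasDerivWithin_le
          (f' := derivWithin (derivWithin ψ I) I)
          (fun x hx => (hgd x hx).hasDerivWithinAt) hbound h0I (hsub ht)
        have hσ1 : σ = 1 := by simp only [hσ, min_eq_right hs2.le]; ring
        rw [hσ1, Real.rpow_one]
        calc |derivWithin ψ I t - D| ≤ M * ‖t - 0‖ := hlip
          _ = M * |t| := by rw [sub_zero]; rfl
          _ ≤ M * ρ := mul_le_mul_of_nonneg_left (habs t ht) hM.le
    refine ⟨D, fun z hz => ?_⟩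
    have h0ρ : (0:ℝ) ∈ Set.Icc (-ρ) ρ := ⟨by linarith, by linarith⟩
    have hF : ∀ x ∈ Set.Icc (-ρ) ρ, HasDerivWithinAt (fun z => ψ z - D * z)
        (derivWithin ψ I x - D) (Set.Icc (-ρ) ρ) x := by
      intro x hx
      have h1 : HasDerivWithinAt ψ (derivWithin ψ I x) (Set.Icc (-ρ) ρ) x :=
        ((hdiff x (hsub hx)).hasDerivWithinAt).mono hsub
      have h2 : HasDerivWithinAt (fun z => D * z) D (Set.Icc (-ρ) ρ) x := by
        simpa using (hasDerivWithinAt_id x (Set.Icc (-ρ) ρ)).const_mul D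
      exact h1.sub h2
    have := (convex_Icc (-ρ) ρ).norm_image_sub_le_of_norm_hasDerivWithin_le hF
      (fun x hx => hkey x hx) h0ρ hz
    have heq : (fun z => ψ z - D * z) z - (fun z => ψ z - D * z) 0 = ψ z - (ψ 0 + D * z) := by
      simp; ring
    rw [heq] at this
    calc |ψ z - (ψ 0 + D * z)| ≤ M * ρ ^ σ * ‖z - 0‖ := this
      _ = M * ρ ^ σ * |z| := by rw [sub_zero]; rfl
      _ ≤ M * ρ ^ σ * ρ := by
          refine mul_le_mul_of_nonneg_left (habs z hz) ?_
          positivity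
      _ = M * ρ ^ (min s 2) := by
          rw [mul_assoc, ← Real.rpow_add_one hρ.ne', hσ, sub_add_cancel]

/-- **Local approximation by half-plane indicators** (Lemma 5.2): for `u = χ_Ω` in
`F_{s,R,M}` with `R ≥ (3/√2) h`, the best `L¹(S)` approximation of `u` on the 3×3
stencil `S` centered at `xb` from the family `V₂` of half-plane indicators satisfies
`inf_{v ∈ V₂} ‖u − v‖_{L¹(S)} ≤ M (3√2 h)^{min(s,2)+1}`. -/
theorem local_halfplane_approximation
    (s R M : ℝ) (hs : 1 ≤ s) (hM : 0 < M) (h : ℝ) (hh : 0 < h)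
    (hR : 3 / Real.sqrt 2 * h ≤ R)
    (xb : Plane) (hxb : xb ∈ unitSquare) (hS : stencil h xb ⊆ unitSquare)
    (Ω : Set Plane) (hΩmeas : MeasurableSet Ω) (hΩ : MemF s R M Ω) :
    sInf {r : ℝ | ∃ (nv : Plane) (c : ℝ), ‖nv‖ = 1 ∧
        r = ∫ y in stencil h xb,
              |Set.indicator Ω (fun _ => (1 : ℝ)) y - halfPlaneInd xb nv c y|}
      ≤ M * (3 * Real.sqrt 2 * h) ^ (min s 2 + 1) := by
  classical
  have hsq2 : Real.sqrt 2 * Real.sqrt 2 = 2 := Real.mul_self_sqrt (by norm_num)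
  have hsq2pos : 0 < Real.sqrt 2 := Real.sqrt_pos.mpr (by norm_num)
  set ρ : ℝ := 3 / Real.sqrt 2 * h with hρdef
  have hρ : 0 < ρ := by positivity
  have hρR : ρ ≤ R := hR
  have h2ρ : 3 * Real.sqrt 2 * h = 2 * ρ := by
    rw [hρdef]; exact sqrt_two_mul_aux h
  obtain ⟨e₁, e₂, h12, h1, h2, ψ, hψb, hψiff⟩ := hΩ.2 xb hxb
  obtain ⟨D, hD⟩ := affine_approx s R M hs hM ψ hψb ρ hρ hρR
  set m : ℝ := min s 2 with hmdef
  have hm1 : 1 ≤ m := le_min hs (by norm_num)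
  set κ : ℝ := M * ρ ^ m with hκdef
  have hκ : 0 < κ := by
    have : 0 < ρ ^ m := Real.rpow_pos_of_pos hρ m
    positivity
  set W : ℝ := Real.sqrt (1 + D ^ 2) with hWdef
  have hW2 : W * W = 1 + D ^ 2 := Real.mul_self_sqrt (by positivity)
  have hW0 : 0 < W := Real.sqrt_pos.mpr (by positivity)
  have hW1 : 1 ≤ W := one_le_sqrt_one_add_sq D
  have hWinv0 : 0 < W⁻¹ := inv_pos.mpr hW0
  have hWinv1 : W⁻¹ ≤ 1 := by
    rw [inv_le_one_iff₀]; right; exact hW1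
  -- inner product facts
  have i11 : ⟪e₁, e₁⟫ = 1 := by rw [real_inner_self_eq_norm_sq, h1]; norm_num
  have i22 : ⟪e₂, e₂⟫ = 1 := by rw [real_inner_self_eq_norm_sq, h2]; norm_num
  have i21 : ⟪e₂, e₁⟫ = 0 := by rw [real_inner_comm]; exact h12
  set nv : Plane := W⁻¹ • (D • e₁ - e₂) with hnvdef
  set u₂ : Plane := W⁻¹ • (e₁ + D • e₂) with hu2def
  set c : ℝ := W⁻¹ * (-ψ 0) with hcdef
  have inn_nv : ∀ v : Plane, ⟪nv, v⟫ = W⁻¹ * (D * ⟪e₁, v⟫ - ⟪e₂, v⟫) := by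
    intro v
    rw [hnvdef]
    simp only [real_inner_smul_left, inner_sub_left]
  have inn_u2 : ∀ v : Plane, ⟪u₂, v⟫ = W⁻¹ * (⟪e₁, v⟫ + D * ⟪e₂, v⟫) := by
    intro v
    rw [hu2def]
    simp only [real_inner_smul_left, inner_add_left]
  have hipnv : ⟪D • e₁ - e₂, D • e₁ - e₂⟫ = 1 + D ^ 2 := by
    simp only [inner_sub_left, inner_sub_right, real_inner_smul_left, real_inner_smul_right,
      i11, i22, i21, h12]
    ring
  have hipu2 : ⟪e₁ + D • e₂, e₁ + D • e₂⟫ = 1 + D ^ 2 := by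
    simp only [inner_add_left, inner_add_right, real_inner_smul_left, real_inner_smul_right,
      i11, i22, i21, h12]
    ring
  have hnorm_of_ip : ∀ (x : Plane), ⟪x, x⟫ = 1 + D ^ 2 → ‖W⁻¹ • x‖ = 1 := by
    intro x hx
    have hxn : ‖x‖ = W := by
      rw [← Real.sqrt_mul_self (norm_nonneg x)]
      rw [hWdef]
      congr 1
      rw [← hx, real_inner_self_eq_norm_sq]
      ring
    rw [norm_smul, hxn, Real.norm_eq_abs, abs_of_pos hWinv0, inv_mul_cancel₀ hW0.ne']
  have hnv_norm : ‖nv‖ = 1 := hnorm_of_ip _ hipnv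
  have hu2_norm : ‖u₂‖ = 1 := hnorm_of_ip _ hipu2
  have h_nv_u2 : ⟪nv, u₂⟫ = 0 := by
    rw [inn_nv, hu2def]
    simp only [real_inner_smul_right, inner_add_right, real_inner_smul_right,
      i11, i22, i21, h12]
    ring
  set b2 := pairONB nv u₂ h_nv_u2 hnv_norm hu2_norm with hb2def
  -- coordinate identity for the half-plane
  have hcoord : ∀ y : Plane, nv 0 * (y 0 - xb 0) + nv 1 * (y 1 - xb 1) = ⟪nv, y - xb⟫ := by
    intro y
    simp [PiLp.inner_apply, RCLike.inner_apply, Fin.sum_univ_two]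
    ring
  -- norm of stencil points
  have hnorm_eq : ∀ x : Plane, ‖x‖ = Real.sqrt ((x 0) ^ 2 + (x 1) ^ 2) := by
    intro x
    rw [EuclideanSpace.norm_eq, Fin.sum_univ_two]
    simp [Real.norm_eq_abs, sq_abs]
  have hstencil_norm : ∀ y ∈ stencil h xb, ‖y - xb‖ ≤ ρ := by
    rintro y ⟨hy0, hy1⟩
    have hρsq : ρ ^ 2 = 9 / 2 * h ^ 2 := by
      rw [hρdef, mul_pow, div_pow, Real.sq_sqrt (by norm_num : (0:ℝ) ≤ 2)]
      ring
    have e0 : (y - xb) 0 = y 0 - xb 0 := rfl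
    have e1 : (y - xb) 1 = y 1 - xb 1 := rfl
    rw [hnorm_eq, e0, e1]
    rw [show ρ = Real.sqrt (ρ ^ 2) from (Real.sqrt_sq hρ.le).symm]
    apply Real.sqrt_le_sqrt
    have a0 : (y 0 - xb 0) ^ 2 ≤ (3 * h / 2) ^ 2 := by
      rw [← sq_abs]
      exact pow_le_pow_left₀ (abs_nonneg _) hy0 2
    have a1 : (y 1 - xb 1) ^ 2 ≤ (3 * h / 2) ^ 2 := by
      rw [← sq_abs]
      exact pow_le_pow_left₀ (abs_nonneg _) hy1 2
    rw [hρsq]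
    have hid : (3 * h / 2) ^ 2 + (3 * h / 2) ^ 2 = 9 / 2 * h ^ 2 := by ring
    linarith only [a0, a1, hid]
  -- the expansion in the rotated frame
  set b := pairONB e₁ e₂ h12 h1 h2 with hbdef
  have hexp : ∀ y : Plane, y = xb + ⟪e₁, y - xb⟫ • e₁ + ⟪e₂, y - xb⟫ • e₂ := by
    intro y
    have hsum := b.sum_repr (y - xb)
    rw [Fin.sum_univ_two] at hsum
    rw [b.repr_apply_apply, b.repr_apply_apply, hbdef, pairONB_apply_zero, pairONB_apply_one]
      at hsum
    rw [add_assoc, hsum]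
    abel
  -- measurability
  have hSmeas : MeasurableSet (stencil h xb) := by
    have : stencil h xb = {y : Plane | |y 0 - xb 0| ≤ 3 * h / 2} ∩
        {y : Plane | |y 1 - xb 1| ≤ 3 * h / 2} := rfl
    rw [this]
    apply MeasurableSet.inter
    · have hc : Continuous fun y : Plane => |y 0 - xb 0| := by
        apply Continuous.abs
        exact ((continuous_apply (0 : Fin 2)).comp (PiLp.continuous_ofLp 2 _)).sub continuous_const
      exact hc.measurable measurableSet_Iic
    · have hc : Continuous fun y : Plane => |y 1 - xb 1| := by
        apply Continuous.abs
        exact ((continuous_apply (1 : Fin 2)).comp (PiLp.continuous_ofLp 2 _)).sub continuous_const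
      exact hc.measurable measurableSet_Iic
  set Bset : Set Plane := {y : Plane | ⟪nv, y - xb⟫ ∈ Set.Icc (c - κ) (c + κ) ∧
      ⟪u₂, y - xb⟫ ∈ Set.Icc (-ρ) ρ} with hBdef
  have hBmeas : MeasurableSet Bset := by
    have : Bset = {y : Plane | ⟪nv, y - xb⟫ ∈ Set.Icc (c - κ) (c + κ)} ∩
        {y : Plane | ⟪u₂, y - xb⟫ ∈ Set.Icc (-ρ) ρ} := rfl
    rw [this]
    exact (measurableSet_innerSlab _ _ _ measurableSet_Icc).inter
      (measurableSet_innerSlab _ _ _ measurableSet_Icc)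
  have hHmeas : MeasurableSet {y : Plane | c ≤ nv 0 * (y 0 - xb 0) + nv 1 * (y 1 - xb 1)} := by
    have : {y : Plane | c ≤ nv 0 * (y 0 - xb 0) + nv 1 * (y 1 - xb 1)}
        = {y : Plane | ⟪nv, y - xb⟫ ∈ Set.Ici c} := by
      ext y; simp [← hcoord y]
    rw [this]
    exact measurableSet_innerSlab _ _ _ measurableSet_Ici
  -- volume computations
  have hvolB : volume Bset = ENNReal.ofReal (2 * κ) * ENNReal.ofReal (2 * ρ) := by
    have := volume_box b2 xb (c - κ) (c + κ) (-ρ) ρ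
    rw [hb2def, pairONB_apply_zero, pairONB_apply_one] at this
    rw [hBdef, this]
    congr 1 <;> congr 1 <;> ring
  have hvolB_ne : volume Bset ≠ ⊤ := by
    rw [hvolB]; exact ENNReal.mul_ne_top ENNReal.ofReal_ne_top ENNReal.ofReal_ne_top
  have hvolS_ne : volume (stencil h xb) ≠ ⊤ := by
    set bstd := (EuclideanSpace.basisFun (Fin 2) ℝ) with hbstd
    have hSeq : stencil h xb = {y : Plane | ⟪bstd 0, y - xb⟫ ∈ Set.Icc (-(3*h/2)) (3*h/2) ∧
        ⟪bstd 1, y - xb⟫ ∈ Set.Icc (-(3*h/2)) (3*h/2)} := by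
      ext y
      have f0 : ⟪bstd 0, y - xb⟫ = y 0 - xb 0 := by
        simp [hbstd, PiLp.inner_apply, RCLike.inner_apply, Fin.sum_univ_two,
          EuclideanSpace.basisFun_apply]
      have f1 : ⟪bstd 1, y - xb⟫ = y 1 - xb 1 := by
        simp [hbstd, PiLp.inner_apply, RCLike.inner_apply, Fin.sum_univ_two,
          EuclideanSpace.basisFun_apply]
      simp only [stencil, Set.mem_setOf_eq, f0, f1, Set.mem_Icc, abs_le]
    rw [hSeq, volume_box bstd xb]
    exact ENNReal.mul_ne_top ENNReal.ofReal_ne_top ENNReal.ofReal_ne_top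
  -- the candidate integral
  set u : Plane → ℝ := Set.indicator Ω (fun _ => (1 : ℝ)) with hudef
  set v : Plane → ℝ := halfPlaneInd xb nv c with hvdef
  have humeas : Measurable u := measurable_const.indicator hΩmeas
  have hvmeas : Measurable v := measurable_const.indicator hHmeas
  have hgmeas : Measurable fun y => |u y - v y| := (humeas.sub hvmeas).abs
  have hg01 : ∀ y, |u y - v y| ≤ 1 := by
    intro y
    rw [hudef, hvdef, halfPlaneInd]
    by_cases hy : y ∈ Ω <;>
      by_cases hy' : y ∈ {y : Plane | c ≤ nv 0 * (y 0 - xb 0) + nv 1 * (y 1 - xb 1)} <;>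
      simp [Set.indicator_apply, hy, hy']
  -- pointwise bound on the stencil
  have hpt : ∀ y ∈ stencil h xb, |u y - v y| ≤ Bset.indicator (fun _ => (1:ℝ)) y := by
    intro y hy
    by_cases hB : y ∈ Bset
    · rw [Set.indicator_of_mem hB]
      exact hg01 y
    · rw [Set.indicator_of_notMem hB]
      -- show u y = v y
      have hny := hstencil_norm y hy
      set z₁ : ℝ := ⟪e₁, y - xb⟫ with hz1def
      set z₂ : ℝ := ⟪e₂, y - xb⟫ with hz2def
      have hz1 : |z₁| ≤ ρ := by
        calc |z₁| ≤ ‖e₁‖ * ‖y - xb‖ := abs_real_inner_le_norm _ _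
          _ = ‖y - xb‖ := by rw [h1, one_mul]
          _ ≤ ρ := hny
      have hz2 : |z₂| ≤ ρ := by
        calc |z₂| ≤ ‖e₂‖ * ‖y - xb‖ := abs_real_inner_le_norm _ _
          _ = ‖y - xb‖ := by rw [h2, one_mul]
          _ ≤ ρ := hny
      have hth : |⟪u₂, y - xb⟫| ≤ ρ := by
        calc |⟪u₂, y - xb⟫| ≤ ‖u₂‖ * ‖y - xb‖ := abs_real_inner_le_norm _ _
          _ = ‖y - xb‖ := by rw [hu2_norm, one_mul]
          _ ≤ ρ := hny
      have hmemΩ : y ∈ Ω ↔ z₂ ≤ ψ z₁ := by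
        have := hψiff z₁ z₂ (le_trans hz1 hρR) (le_trans hz2 hρR)
        rw [← hexp y] at this
        exact this
      have hmemH : y ∈ {y : Plane | c ≤ nv 0 * (y 0 - xb 0) + nv 1 * (y 1 - xb 1)}
          ↔ z₂ ≤ ψ 0 + D * z₁ := by
        simp only [Set.mem_setOf_eq, hcoord y, inn_nv (y - xb), ← hz1def, ← hz2def, hcdef]
        rw [mul_le_mul_iff_right₀ hWinv0]
        constructor <;> intro h' <;> linarith only [h']
      have hDz := hD z₁ (abs_le.mp hz1)
      have habsD := abs_le.mp hDz
      -- if the indicators differ, y ∈ Bset, contradiction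
      have heq : u y = v y := by
        by_cases hyΩ : y ∈ Ω <;> by_cases hyH : y ∈ {y : Plane | c ≤ nv 0 * (y 0 - xb 0)
            + nv 1 * (y 1 - xb 1)}
        · rw [hudef, hvdef, halfPlaneInd, Set.indicator_of_mem hyΩ, Set.indicator_of_mem hyH]
        · exfalso
          apply hB
          have hp1 := hmemΩ.mp hyΩ
          have hp2 : ¬ (z₂ ≤ ψ 0 + D * z₁) := fun hc' => hyH (hmemH.mpr hc')
          push_neg at hp2
          have hslab : |z₂ - (ψ 0 + D * z₁)| ≤ κ :=
            abs_between z₂ (ψ z₁) (ψ 0 + D * z₁) κ hDz (Or.inl ⟨hp2, hp1⟩)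
          refine ⟨?_, Set.mem_Icc.mpr (abs_le.mp hth)⟩
          rw [inn_nv (y - xb), ← hz1def, ← hz2def, Set.mem_Icc, hcdef]
          exact slab_shift W⁻¹ κ (ψ 0) D z₁ z₂ hWinv0 hWinv1 hκ.le hslab
        · exfalso
          apply hB
          have hp1 : ¬ (z₂ ≤ ψ z₁) := fun hc' => hyΩ (hmemΩ.mpr hc')
          push_neg at hp1
          have hp2 := hmemH.mp hyH
          have hslab : |z₂ - (ψ 0 + D * z₁)| ≤ κ :=
            abs_between z₂ (ψ z₁) (ψ 0 + D * z₁) κ hDz (Or.inr ⟨hp1, hp2⟩)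
          refine ⟨?_, Set.mem_Icc.mpr (abs_le.mp hth)⟩
          rw [inn_nv (y - xb), ← hz1def, ← hz2def, Set.mem_Icc, hcdef]
          exact slab_shift W⁻¹ κ (ψ 0) D z₁ z₂ hWinv0 hWinv1 hκ.le hslab
        · rw [hudef, hvdef, halfPlaneInd, Set.indicator_of_notMem hyΩ,
            Set.indicator_of_notMem hyH]
      rw [heq, sub_self, abs_zero]
  -- integrability
  have hIntg : IntegrableOn (fun y => |u y - v y|) (stencil h xb) := by
    apply Measure.integrableOn_of_bounded hvolS_ne hgmeas.aestronglyMeasurable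
    filter_upwards with y
    rw [Real.norm_eq_abs, abs_abs]
    exact hg01 y
  have hIntB : IntegrableOn (Bset.indicator fun _ => (1:ℝ)) (stencil h xb) := by
    apply Measure.integrableOn_of_bounded (M := 1) hvolS_ne
      ((measurable_const.indicator hBmeas).aestronglyMeasurable)
    filter_upwards with y
    rw [Real.norm_eq_abs]
    by_cases hB : y ∈ Bset
    · rw [Set.indicator_of_mem hB]; norm_num
    · rw [Set.indicator_of_notMem hB]; norm_num
  -- the chain of estimates
  have step1 : ∫ y in stencil h xb, |u y - v y|
      ≤ ∫ y in stencil h xb, Bset.indicator (fun _ => (1:ℝ)) y :=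
    setIntegral_mono_on hIntg hIntB hSmeas hpt
  have step2 : ∫ y in stencil h xb, Bset.indicator (fun _ => (1:ℝ)) y
      = (volume (stencil h xb ∩ Bset)).toReal := by
    rw [setIntegral_indicator hBmeas, setIntegral_const, smul_eq_mul, mul_one, measureReal_def]
  have step3 : (volume (stencil h xb ∩ Bset)).toReal ≤ (volume Bset).toReal :=
    ENNReal.toReal_mono hvolB_ne (measure_mono Set.inter_subset_right)
  have step4 : (volume Bset).toReal = 2 * κ * (2 * ρ) := by
    rw [hvolB, ENNReal.toReal_mul, ENNReal.toReal_ofReal (by positivity),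
      ENNReal.toReal_ofReal (by positivity)]
  have step5 : 2 * κ * (2 * ρ) ≤ M * (3 * Real.sqrt 2 * h) ^ (m + 1) := by
    rw [h2ρ, Real.mul_rpow (by norm_num) hρ.le]
    have e3 : (4:ℝ) ≤ 2 ^ (m + 1 : ℝ) := by
      have h1 : (2:ℝ) ^ (2:ℝ) ≤ 2 ^ (m + 1 : ℝ) :=
        Real.rpow_le_rpow_of_exponent_le one_le_two (by linarith only [hm1])
      have h2 : (2:ℝ) ^ (2:ℝ) = 4 := by
        rw [show (2:ℝ) = ((2:ℕ):ℝ) from by norm_num]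
        rw [Real.rpow_natCast]
        norm_num
      linarith only [h1, h2]
    have hρm1 : (0:ℝ) ≤ ρ ^ (m + 1 : ℝ) := (Real.rpow_pos_of_pos hρ _).le
    have e1 : 2 * κ * (2 * ρ) = 4 * M * ρ ^ (m + 1 : ℝ) := by
      rw [hκdef, Real.rpow_add_one hρ.ne' m]
      ring
    rw [e1]
    calc 4 * M * ρ ^ (m + 1 : ℝ) ≤ 2 ^ (m + 1 : ℝ) * M * ρ ^ (m + 1 : ℝ) := by
          apply mul_le_mul_of_nonneg_right _ hρm1
          exact mul_le_mul_of_nonneg_right e3 hM.le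
      _ = M * (2 ^ (m + 1 : ℝ) * ρ ^ (m + 1 : ℝ)) := by ring
  -- conclude via the infimum
  have hmem : (∫ y in stencil h xb, |u y - v y|) ∈ {r : ℝ | ∃ (nv' : Plane) (c' : ℝ),
      ‖nv'‖ = 1 ∧ r = ∫ y in stencil h xb,
        |Set.indicator Ω (fun _ => (1 : ℝ)) y - halfPlaneInd xb nv' c' y|} :=
    ⟨nv, c, hnv_norm, rfl⟩
  have hbdd : BddBelow {r : ℝ | ∃ (nv' : Plane) (c' : ℝ), ‖nv'‖ = 1 ∧
      r = ∫ y in stencil h xb,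
        |Set.indicator Ω (fun _ => (1 : ℝ)) y - halfPlaneInd xb nv' c' y|} := by
    refine ⟨0, fun r hr => ?_⟩
    obtain ⟨nv', c', _, rfl⟩ := hr
    exact integral_nonneg fun y => abs_nonneg _
  refine le_trans (csInf_le hbdd hmem) ?_
  calc (∫ y in stencil h xb, |u y - v y|)
      ≤ (volume (stencil h xb ∩ Bset)).toReal := le_trans step1 (le_of_eq step2)
    _ ≤ (volume Bset).toReal := step3
    _ = 2 * κ * (2 * ρ) := step4
    _ ≤ M * (3 * Real.sqrt 2 * h) ^ (m + 1) := step5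

end
end

section
/- Let Φ be an m×N real matrix, V = ℝ^N with a norm ‖·‖_V, V_k the set of k-sparse vectors, and e_k(u)_V = min_{v∈V_k}‖u−v‖_V. If there exists a recovery map R : ℝ^m → ℝ^N with ‖u−R(Φu)‖_V ≤ C₀ e_n(u)_V for all u ∈ ℝ^N (instance optimality IOP(n,C₀)), then Φ satisfies the null space property NSP(2n,C₀): ‖v‖_V ≤ C₀ e_{2n}(v)_V for all v with Φv = 0. Conversely, NSP(2n,C₁) implies existence of a map R with IOP(n,2C₁). -/
set_option maxHeartbeats 1000000

noncomputable section

/-- The best `k`-term (sparse) approximation error `e_k(u)_V` of `u ∈ ℝ^N` in the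
norm `normV`. -/
def bestTermErr {N : ℕ} (normV : (Fin N → ℝ) → ℝ) (k : ℕ) (u : Fin N → ℝ) : ℝ :=
  sInf {r : ℝ | ∃ v : Fin N → ℝ, {i | v i ≠ 0}.ncard ≤ k ∧ r = normV (u - v)}

namespace CDD


variable {N : ℕ} {normV : (Fin N → ℝ) → ℝ}

lemma normV_zero (hVdef : ∀ x, normV x = 0 ↔ x = 0) : normV 0 = 0 := (hVdef 0).2 rfl

lemma normV_neg (hVsmul : ∀ (a : ℝ) x, normV (a • x) = |a| * normV x) (x : Fin N → ℝ) :
    normV (-x) = normV x := by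
  have := hVsmul (-1) x
  simpa using this

lemma normV_nonneg (hVadd : ∀ x y, normV (x + y) ≤ normV x + normV y)
    (hVsmul : ∀ (a : ℝ) x, normV (a • x) = |a| * normV x)
    (hVdef : ∀ x, normV x = 0 ↔ x = 0) (x : Fin N → ℝ) : 0 ≤ normV x := by
  have h := hVadd x (-x)
  rw [add_neg_cancel, normV_zero hVdef, normV_neg hVsmul] at h
  linarith

lemma bte_set_nonempty (k : ℕ) (u : Fin N → ℝ) :
    {r : ℝ | ∃ v : Fin N → ℝ, {i | v i ≠ 0}.ncard ≤ k ∧ r = normV (u - v)}.Nonempty :=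
  ⟨normV u, 0, by simp, by simp⟩

lemma bte_le (hVadd : ∀ x y, normV (x + y) ≤ normV x + normV y)
    (hVsmul : ∀ (a : ℝ) x, normV (a • x) = |a| * normV x)
    (hVdef : ∀ x, normV x = 0 ↔ x = 0) {k : ℕ} {u v : Fin N → ℝ}
    (hv : {i | v i ≠ 0}.ncard ≤ k) : bestTermErr normV k u ≤ normV (u - v) := by
  refine csInf_le ⟨0, ?_⟩ ⟨v, hv, rfl⟩
  rintro r ⟨w, -, rfl⟩
  exact normV_nonneg hVadd hVsmul hVdef _

lemma le_bte {k : ℕ} {u : Fin N → ℝ} {b : ℝ}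
    (h : ∀ v : Fin N → ℝ, {i | v i ≠ 0}.ncard ≤ k → b ≤ normV (u - v)) :
    b ≤ bestTermErr normV k u := by
  refine le_csInf (bte_set_nonempty k u) ?_
  rintro r ⟨v, hv, rfl⟩
  exact h v hv

lemma bte_nonneg (hVadd : ∀ x y, normV (x + y) ≤ normV x + normV y)
    (hVsmul : ∀ (a : ℝ) x, normV (a • x) = |a| * normV x)
    (hVdef : ∀ x, normV x = 0 ↔ x = 0) (k : ℕ) (u : Fin N → ℝ) :
    0 ≤ bestTermErr normV k u :=
  le_bte fun v _ => normV_nonneg hVadd hVsmul hVdef _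

lemma le_mul_bte {k : ℕ} {u : Fin N → ℝ} {b C : ℝ} (hC : 0 < C)
    (h : ∀ z : Fin N → ℝ, {i | z i ≠ 0}.ncard ≤ k → b ≤ C * normV (u - z)) :
    b ≤ C * bestTermErr normV k u := by
  have h1 : b / C ≤ bestTermErr normV k u := by
    refine le_bte fun z hz => ?_
    rw [div_le_iff₀ hC, mul_comm]
    exact h z hz
  calc b = C * (b / C) := by field_simp
    _ ≤ C * bestTermErr normV k u := by
        exact mul_le_mul_of_nonneg_left h1 hC.le

section Analytic

variable (hVadd : ∀ x y, normV (x + y) ≤ normV x + normV y)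
  (hVsmul : ∀ (a : ℝ) x, normV (a • x) = |a| * normV x)
  (hVdef : ∀ x, normV x = 0 ↔ x = 0)
include hVadd hVsmul hVdef

lemma normV_sum_le {ι : Type*} (s : Finset ι) (f : ι → Fin N → ℝ) :
    normV (∑ i ∈ s, f i) ≤ ∑ i ∈ s, normV (f i) := by
  classical
  induction s using Finset.induction_on with
  | empty => simp [normV_zero hVdef]
  | insert _ _ hx ih =>
      rename_i a s
      rw [Finset.sum_insert hx, Finset.sum_insert hx]
      exact le_trans (hVadd _ _) (by linarith)

lemma normV_le_const_mul : ∃ K : ℝ, 0 ≤ K ∧ ∀ x : Fin N → ℝ, normV x ≤ K * ‖x‖ := by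
  classical
  refine ⟨∑ i, normV (fun j => if i = j then 1 else 0), ?_, ?_⟩
  · exact Finset.sum_nonneg fun i _ => normV_nonneg hVadd hVsmul hVdef _
  · intro x
    have hx : x = ∑ i, x i • fun j => if i = j then (1 : ℝ) else 0 := pi_eq_sum_univ x
    calc normV x ≤ ∑ i, normV (x i • fun j => if i = j then (1 : ℝ) else 0) := by
          have h := normV_sum_le hVadd hVsmul hVdef Finset.univ
            (fun i => x i • fun j => if i = j then (1 : ℝ) else 0)
          rw [← hx] at h
          exact h
      _ ≤ ∑ i, ‖x‖ * normV (fun j => if i = j then (1 : ℝ) else 0) := by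
          refine Finset.sum_le_sum fun i _ => ?_
          rw [hVsmul]
          exact mul_le_mul_of_nonneg_right
            (by rw [← Real.norm_eq_abs]; exact norm_le_pi_norm x i)
            (normV_nonneg hVadd hVsmul hVdef _)
      _ = (∑ i, normV (fun j => if i = j then (1 : ℝ) else 0)) * ‖x‖ := by
          rw [← Finset.mul_sum, mul_comm]

lemma normV_continuous : Continuous normV := by
  obtain ⟨K, hK0, hK⟩ := normV_le_const_mul hVadd hVsmul hVdef
  have lip : LipschitzWith K.toNNReal normV := by
    refine LipschitzWith.of_dist_le_mul fun x y => ?_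
    rw [Real.coe_toNNReal K hK0, Real.dist_eq, dist_eq_norm]
    have h1 : normV x - normV y ≤ normV (x - y) := by
      have := hVadd y (x - y); simp at this; linarith
    have h2 : normV y - normV x ≤ normV (x - y) := by
      have := hVadd x (y - x)
      have hn : normV (y - x) = normV (x - y) := by
        rw [← normV_neg hVsmul (x - y), neg_sub]
      simp at this; linarith
    rw [abs_sub_le_iff]
    constructor <;> linarith [hK (x - y)]
  exact lip.continuous

lemma normV_coercive : ∃ c : ℝ, 0 < c ∧ ∀ x : Fin N → ℝ, c * ‖x‖ ≤ normV x := by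
  rcases Nat.eq_zero_or_pos N with hN | hN
  · refine ⟨1, one_pos, fun x => ?_⟩
    subst hN
    have hx : x = 0 := funext fun i => i.elim0
    rw [hx, normV_zero hVdef, norm_zero]
    norm_num
  · haveI : Nonempty (Fin N) := ⟨⟨0, hN⟩⟩
    have hsne : (Metric.sphere (0 : Fin N → ℝ) 1).Nonempty :=
      NormedSpace.sphere_nonempty.mpr zero_le_one
    obtain ⟨z, hz, hzmin⟩ := (isCompact_sphere (0 : Fin N → ℝ) 1).exists_isMinOn hsne
      ((normV_continuous hVadd hVsmul hVdef).continuousOn)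
    have hz1 : ‖z‖ = 1 := by simpa using hz
    have hzpos : 0 < normV z := by
      rcases lt_or_eq_of_le (normV_nonneg hVadd hVsmul hVdef z) with h | h
      · exact h
      · exfalso
        have : z = 0 := (hVdef z).1 h.symm
        rw [this] at hz1; simp at hz1
    refine ⟨normV z, hzpos, fun x => ?_⟩
    rcases eq_or_ne x 0 with rfl | hx
    · simp [normV_zero hVdef, normV_nonneg]
    · have hxn : (0 : ℝ) < ‖x‖ := norm_pos_iff.mpr hx
      have hmem : (‖x‖⁻¹ • x) ∈ Metric.sphere (0 : Fin N → ℝ) 1 := by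
        simp [norm_smul, abs_of_pos (inv_pos.mpr hxn), inv_mul_cancel₀ hxn.ne']
      have hle : normV z ≤ normV (‖x‖⁻¹ • x) := hzmin hmem
      have heq : normV (‖x‖⁻¹ • x) = ‖x‖⁻¹ * normV x := by
        rw [hVsmul, abs_of_pos (inv_pos.mpr hxn)]
      rw [heq] at hle
      calc normV z * ‖x‖ ≤ (‖x‖⁻¹ * normV x) * ‖x‖ :=
            mul_le_mul_of_nonneg_right hle hxn.le
        _ = normV x := by field_simp
  
lemma exists_min_on_closed {D : Set (Fin N → ℝ)} (hD : IsClosed D) (hne : D.Nonempty) :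
    ∃ d ∈ D, ∀ x ∈ D, normV d ≤ normV x := by
  obtain ⟨c, hc, hcoer⟩ := normV_coercive hVadd hVsmul hVdef
  obtain ⟨d₀, hd₀⟩ := hne
  set r : ℝ := ‖d₀‖ + normV d₀ / c + 1 with hr
  have hrd₀ : ‖d₀‖ ≤ r := by
    have : 0 ≤ normV d₀ / c := div_nonneg (normV_nonneg hVadd hVsmul hVdef _) hc.le
    simp only [hr]; linarith
  have hcomp : IsCompact (D ∩ Metric.closedBall 0 r) :=
    (isCompact_closedBall (0 : Fin N → ℝ) r).inter_left hD
  have hne' : (D ∩ Metric.closedBall 0 r).Nonempty :=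
    ⟨d₀, hd₀, by simpa [Metric.mem_closedBall, dist_zero_right] using hrd₀⟩
  obtain ⟨d, ⟨hdD, hdB⟩, hdmin⟩ := hcomp.exists_isMinOn hne'
    ((normV_continuous hVadd hVsmul hVdef).continuousOn)
  refine ⟨d, hdD, fun x hx => ?_⟩
  by_cases hxB : x ∈ Metric.closedBall (0 : Fin N → ℝ) r
  · exact hdmin ⟨hx, hxB⟩
  · have hxr : r < ‖x‖ := by
      simp only [Metric.mem_closedBall, dist_zero_right, not_le] at hxB
      exact hxB
    have h1 : normV d ≤ normV d₀ := hdmin ⟨hd₀, by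
      simpa [Metric.mem_closedBall, dist_zero_right] using hrd₀⟩
    have h2 : normV d₀ ≤ c * r := by
      have hcr : c * r = c * ‖d₀‖ + normV d₀ + c := by
        rw [hr]; field_simp
      nlinarith [norm_nonneg d₀]
    have h3 : c * r ≤ c * ‖x‖ := mul_le_mul_of_nonneg_left hxr.le hc.le
    linarith [hcoer x]

end Analytic




lemma exists_min_pair {m : ℕ} (Φ : Matrix (Fin m) (Fin N) ℝ) (n : ℕ)
    (hVadd : ∀ x y : Fin N → ℝ, normV (x + y) ≤ normV x + normV y)
    (hVsmul : ∀ (a : ℝ) (x : Fin N → ℝ), normV (a • x) = |a| * normV x)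
    (hVdef : ∀ x : Fin N → ℝ, normV x = 0 ↔ x = 0)
    (y : Fin m → ℝ) (z₀ : Fin N → ℝ) (hz₀ : Φ.mulVec z₀ = y) :
    ∃ z v : Fin N → ℝ, Φ.mulVec z = y ∧ {i | v i ≠ 0}.ncard ≤ n ∧
      ∀ z' v' : Fin N → ℝ, Φ.mulVec z' = y → {i | v' i ≠ 0}.ncard ≤ n →
        normV (z - v) ≤ normV (z' - v') := by
  classical
  set K : Submodule ℝ (Fin N → ℝ) := LinearMap.ker Φ.mulVecLin with hK
  set VS : Finset (Fin N) → Submodule ℝ (Fin N → ℝ) :=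
    fun S => Submodule.pi ((↑S)ᶜ : Set (Fin N)) (fun _ => (⊥ : Submodule ℝ ℝ)) with hVS
  set D : Set (Fin N → ℝ) :=
    ⋃ (S : Finset (Fin N)) (_ : S.card ≤ n), {x | x - z₀ ∈ K ⊔ VS S} with hD
  have hDclosed : IsClosed D := by
    refine isClosed_iUnion_of_finite fun S => isClosed_iUnion_of_finite fun _ => ?_
    exact IsClosed.preimage (continuous_id.sub continuous_const)
      (Submodule.closed_of_finiteDimensional _)
  have hmemD : ∀ z v : Fin N → ℝ, Φ.mulVec z = y → {i | v i ≠ 0}.ncard ≤ n →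
      z - v ∈ D := by
    intro z v hz hv
    set T : Finset (Fin N) := {i | v i ≠ 0}.toFinite.toFinset with hT
    have hTcard : T.card ≤ n := by
      rwa [← Set.ncard_eq_toFinset_card {i | v i ≠ 0}]
    refine Set.mem_iUnion₂.mpr ⟨T, hTcard, ?_⟩
    have heq : (z - v) - z₀ = (z - z₀) + (-v) := by abel
    have h1 : z - z₀ ∈ K := by
      rw [hK, LinearMap.mem_ker, map_sub]
      simp [Matrix.mulVecLin_apply, hz, hz₀]
    have h2 : -v ∈ VS T := by
      rw [hVS]
      refine Submodule.mem_pi.mpr fun i hi => ?_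
      have : v i = 0 := by
        by_contra hvi
        exact hi (by simpa [hT] using hvi)
      simp [this]
    show (z - v) - z₀ ∈ K ⊔ VS T
    rw [heq]
    exact Submodule.add_mem_sup h1 h2
  have hfromD : ∀ x ∈ D, ∃ z v : Fin N → ℝ, Φ.mulVec z = y ∧
      {i | v i ≠ 0}.ncard ≤ n ∧ x = z - v := by
    intro x hx
    obtain ⟨S, hS, hx⟩ := Set.mem_iUnion₂.mp hx
    obtain ⟨k, hk, s, hs, hks⟩ := Submodule.mem_sup.mp hx
    refine ⟨z₀ + k, -s, ?_, ?_, ?_⟩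
    · rw [Matrix.mulVec_add, hz₀]
      have : Φ.mulVec k = 0 := by
        have := (LinearMap.mem_ker).mp hk
        simpa [Matrix.mulVecLin_apply] using this
      rw [this, add_zero]
    · have hsub : {i | (-s) i ≠ 0} ⊆ (↑S : Set (Fin N)) := by
        intro i hi
        by_contra hiS
        have := Submodule.mem_pi.mp hs i hiS
        simp only [Submodule.mem_bot] at this
        exact hi (by simp [this])
      calc {i | (-s) i ≠ 0}.ncard ≤ (↑S : Set (Fin N)).ncard :=
            Set.ncard_le_ncard hsub (Set.toFinite _)
        _ = S.card := Set.ncard_coe_finset S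
        _ ≤ n := hS
    · have : x - z₀ = k + s := hks.symm
      funext i
      have := congrFun this i
      simp only [Pi.sub_apply, Pi.add_apply] at this ⊢
      simp only [Pi.neg_apply]
      linarith
  have hne : D.Nonempty := by
    refine ⟨z₀ - 0, hmemD z₀ 0 hz₀ (by simp)⟩
  obtain ⟨d, hdD, hdmin⟩ := exists_min_on_closed hVadd hVsmul hVdef hDclosed hne
  obtain ⟨z, v, hz, hv, hzv⟩ := hfromD d hdD
  refine ⟨z, v, hz, hv, fun z' v' hz' hv' => ?_⟩
  rw [← hzv]
  exact hdmin _ (hmemD z' v' hz' hv')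


end CDD

/-- **Cohen–Dahmen–DeVore equivalence of instance optimality and the null space
property** (Theorem 6.1): `IOP(n, C₀) ⟹ NSP(2n, C₀)` and `NSP(2n, C₁) ⟹ IOP(n, 2C₁)`. -/
theorem instance_optimality_iff_null_space_property
    {m N : ℕ} (Φ : Matrix (Fin m) (Fin N) ℝ) (n : ℕ)
    (normV : (Fin N → ℝ) → ℝ)
    (hVadd : ∀ x y, normV (x + y) ≤ normV x + normV y)
    (hVsmul : ∀ (a : ℝ) x, normV (a • x) = |a| * normV x)
    (hVdef : ∀ x, normV x = 0 ↔ x = 0)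
    (C₀ C₁ : ℝ) (hC₀ : 0 < C₀) (hC₁ : 0 < C₁) :
    ((∃ Rec : (Fin m → ℝ) → (Fin N → ℝ),
        ∀ u : Fin N → ℝ, normV (u - Rec (Φ.mulVec u)) ≤ C₀ * bestTermErr normV n u) →
      ∀ v : Fin N → ℝ, Φ.mulVec v = 0 → normV v ≤ C₀ * bestTermErr normV (2 * n) v) ∧
    ((∀ v : Fin N → ℝ, Φ.mulVec v = 0 → normV v ≤ C₁ * bestTermErr normV (2 * n) v) →
      ∃ Rec : (Fin m → ℝ) → (Fin N → ℝ),
        ∀ u : Fin N → ℝ, normV (u - Rec (Φ.mulVec u)) ≤ 2 * C₁ * bestTermErr normV n u) := by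
  classical
  constructor
  · -- IOP → NSP
    rintro ⟨Rec, hRec⟩ v hv
    refine CDD.le_mul_bte hC₀ fun z hz => ?_
    -- split z into two n-sparse pieces
    set S : Finset (Fin N) := {i | z i ≠ 0}.toFinite.toFinset with hS
    have hScard : S.card ≤ 2 * n := by
      rwa [← Set.ncard_eq_toFinset_card {i | z i ≠ 0}]
    obtain ⟨S₁, hS₁sub, hS₁card⟩ := Finset.exists_subset_card_eq (s := S) (n := min n S.card) (min_le_right _ _)
    set z₁ : Fin N → ℝ := fun i => if i ∈ S₁ then z i else 0 with hz₁
    set z₂ : Fin N → ℝ := z - z₁ with hz₂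
    have hz₁supp : {i | z₁ i ≠ 0}.ncard ≤ n := by
      have hsub : {i | z₁ i ≠ 0} ⊆ (↑S₁ : Set (Fin N)) := by
        intro i hi
        by_contra hiS
        simp only [Set.mem_setOf_eq, hz₁] at hi
        rw [if_neg (by simpa using hiS)] at hi
        exact hi rfl
      calc {i | z₁ i ≠ 0}.ncard ≤ (↑S₁ : Set (Fin N)).ncard :=
            Set.ncard_le_ncard hsub (Set.toFinite _)
        _ = S₁.card := Set.ncard_coe_finset _
        _ ≤ n := by rw [hS₁card]; exact min_le_left _ _
    have hz₂supp : {i | z₂ i ≠ 0}.ncard ≤ n := by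
      have hsub : {i | z₂ i ≠ 0} ⊆ (↑(S \ S₁) : Set (Fin N)) := by
        intro i hi
        simp only [Set.mem_setOf_eq, hz₂, Pi.sub_apply, hz₁] at hi
        by_cases hiS₁ : i ∈ S₁
        · rw [if_pos hiS₁] at hi; simp at hi
        · rw [if_neg hiS₁, sub_zero] at hi
          have hiS : i ∈ S := by
            rw [hS, Set.Finite.mem_toFinset]; exact hi
          simp [Finset.mem_sdiff, hiS, hiS₁]
      calc {i | z₂ i ≠ 0}.ncard ≤ (↑(S \ S₁) : Set (Fin N)).ncard :=
            Set.ncard_le_ncard hsub (Set.toFinite _)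
        _ = (S \ S₁).card := Set.ncard_coe_finset _
        _ = S.card - S₁.card := Finset.card_sdiff_of_subset hS₁sub
        _ ≤ n := by omega
    set u₁ : Fin N → ℝ := v - z₂ with hu₁
    have hΦu₁ : Φ.mulVec u₁ = Φ.mulVec (-z₂) := by
      rw [hu₁, Matrix.mulVec_sub, hv, Matrix.mulVec_neg, zero_sub]
    -- e_n(-z₂) = 0
    have hez₂ : bestTermErr normV n (-z₂) = 0 := by
      refine le_antisymm ?_ (CDD.bte_nonneg hVadd hVsmul hVdef _ _)
      have hsparse : {i | (-z₂) i ≠ 0}.ncard ≤ n := by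
        have : {i | (-z₂) i ≠ 0} = {i | z₂ i ≠ 0} := by
          ext i; simp
        rwa [this]
      have := CDD.bte_le hVadd hVsmul hVdef (u := -z₂) hsparse
      simpa [CDD.normV_zero hVdef] using this
    have key : normV v ≤ normV (u₁ - Rec (Φ.mulVec u₁)) + normV (z₂ + Rec (Φ.mulVec u₁)) := by
      have hvdecomp : v = (u₁ - Rec (Φ.mulVec u₁)) + (z₂ + Rec (Φ.mulVec u₁)) := by
        rw [hu₁]; abel
      conv_lhs => rw [hvdecomp]
      exact hVadd _ _
    have t1 : normV (u₁ - Rec (Φ.mulVec u₁)) ≤ C₀ * normV (v - z) := by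
      refine le_trans (hRec u₁) (mul_le_mul_of_nonneg_left ?_ hC₀.le)
      have h := CDD.bte_le hVadd hVsmul hVdef (u := u₁) hz₁supp
      have : u₁ - z₁ = v - z := by rw [hu₁, hz₂]; abel
      rwa [this] at h
    have t2 : normV (z₂ + Rec (Φ.mulVec u₁)) ≤ 0 := by
      rw [hΦu₁]
      have hrw : z₂ + Rec (Φ.mulVec (-z₂)) = -((-z₂) - Rec (Φ.mulVec (-z₂))) := by abel
      rw [hrw, CDD.normV_neg hVsmul]
      have := hRec (-z₂)
      rw [hez₂, mul_zero] at this
      exact this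
    linarith
  · -- NSP → IOP
    intro hNSP
    have key : ∀ y : Fin m → ℝ, ∃ z : Fin N → ℝ,
        (∃ w, Φ.mulVec w = y) → Φ.mulVec z = y ∧ ∃ v, {i | v i ≠ 0}.ncard ≤ n ∧
          ∀ z' v' : Fin N → ℝ, Φ.mulVec z' = y → {i | v' i ≠ 0}.ncard ≤ n →
            normV (z - v) ≤ normV (z' - v') := by
      intro y
      by_cases h : ∃ w, Φ.mulVec w = y
      · obtain ⟨w, hw⟩ := h
        obtain ⟨z, v, h1, h2, h3⟩ := CDD.exists_min_pair Φ n hVadd hVsmul hVdef y w hw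
        exact ⟨z, fun _ => ⟨h1, v, h2, h3⟩⟩
      · exact ⟨0, fun h' => absurd h' h⟩
    choose Rec hRec using key
    refine ⟨Rec, fun u => ?_⟩
    obtain ⟨hΦz, vs, hvs, hmin⟩ := hRec (Φ.mulVec u) ⟨u, rfl⟩
    set z : Fin N → ℝ := Rec (Φ.mulVec u) with hzdef
    have hker : Φ.mulVec (u - z) = 0 := by
      rw [Matrix.mulVec_sub, hΦz, sub_self]
    have h1 : normV (u - z) ≤ C₁ * bestTermErr normV (2 * n) (u - z) := hNSP _ hker
    have h2 : bestTermErr normV (2 * n) (u - z) ≤ 2 * bestTermErr normV n u := by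
      refine CDD.le_mul_bte (by norm_num) fun w hw => ?_
      have hsp : {i | (w - vs) i ≠ 0}.ncard ≤ 2 * n := by
        have hsub : {i | (w - vs) i ≠ 0} ⊆ {i | w i ≠ 0} ∪ {i | vs i ≠ 0} := by
          intro i hi
          by_contra hc
          simp only [Set.mem_union, Set.mem_setOf_eq, not_or, not_not] at hc
          simp only [Set.mem_setOf_eq, Pi.sub_apply, hc.1, hc.2, sub_zero] at hi
          exact hi rfl
        calc {i | (w - vs) i ≠ 0}.ncard
            ≤ ({i | w i ≠ 0} ∪ {i | vs i ≠ 0}).ncard :=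
              Set.ncard_le_ncard hsub (Set.toFinite _)
          _ ≤ {i | w i ≠ 0}.ncard + {i | vs i ≠ 0}.ncard := Set.ncard_union_le _ _
          _ ≤ n + n := add_le_add hw hvs
          _ = 2 * n := by ring
      have e1 : bestTermErr normV (2 * n) (u - z) ≤ normV ((u - z) - (w - vs)) :=
        CDD.bte_le hVadd hVsmul hVdef hsp
      have e2 : (u - z) - (w - vs) = (u - w) + (vs - z) := by abel
      have e3 : normV ((u - w) + (vs - z)) ≤ normV (u - w) + normV (vs - z) := hVadd _ _
      have e4 : normV (vs - z) = normV (z - vs) := by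
        rw [← CDD.normV_neg hVsmul (z - vs), neg_sub]
      have e5 : normV (z - vs) ≤ normV (u - w) := hmin u w rfl hw
      rw [e2] at e1
      linarith
    calc normV (u - z) ≤ C₁ * bestTermErr normV (2 * n) (u - z) := h1
      _ ≤ C₁ * (2 * bestTermErr normV n u) := mul_le_mul_of_nonneg_left h2 hC₁.le
      _ = 2 * C₁ * bestTermErr normV n u := by ring


end
end

section
/- Let Φ be an m×N matrix, ‖·‖_V a norm on ℝ^N, ‖·‖_Z a norm on ℝ^m. Suppose S(α): ‖Φu‖_Z ≤ α‖u‖_V for all u ∈ ℝ^N, and IS(2n,μ): ‖v‖_V ≤ μ‖Φv‖_Z for all 2n-sparse v. Then Φ satisfies the null space property of order 2n with constant 1+αμ: for every v in the null space of Φ, ‖v‖_V ≤ (1+αμ)·e_{2n}(v)_V. -/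
noncomputable section

/-- **Stability and inverse stability imply the null space property** (first half of
Theorem 6.2): if `‖Φu‖_Z ≤ α‖u‖_V` for all `u` and `‖v‖_V ≤ μ‖Φv‖_Z` for all
`2n`-sparse `v`, then `Φ` satisfies `NSP(2n, 1 + αμ)`:
`‖v‖_V ≤ (1 + αμ)·e_{2n}(v)_V` for all `v` in the null space of `Φ`. -/
theorem stability_implies_null_space_property
    {m N : ℕ} (Φ : Matrix (Fin m) (Fin N) ℝ) (n : ℕ)
    (normV : (Fin N → ℝ) → ℝ)
    (hVadd : ∀ x y, normV (x + y) ≤ normV x + normV y)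
    (hVsmul : ∀ (a : ℝ) x, normV (a • x) = |a| * normV x)
    (hVdef : ∀ x, normV x = 0 ↔ x = 0)
    (Z : (Fin m → ℝ) → ℝ)
    (hZadd : ∀ x y, Z (x + y) ≤ Z x + Z y)
    (hZsmul : ∀ (a : ℝ) x, Z (a • x) = |a| * Z x)
    (hZdef : ∀ x, Z x = 0 ↔ x = 0)
    (α μ : ℝ) (hα : 0 < α) (hμ : 0 < μ)
    (hS : ∀ u : Fin N → ℝ, Z (Φ.mulVec u) ≤ α * normV u)
    (hIS : ∀ v : Fin N → ℝ, {i | v i ≠ 0}.ncard ≤ 2 * n → normV v ≤ μ * Z (Φ.mulVec v)) :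
    ∀ v : Fin N → ℝ, Φ.mulVec v = 0 →
      normV v ≤ (1 + α * μ) * bestTermErr normV (2 * n) v := by
  intro v hv
  have hpos : (0:ℝ) < 1 + α * μ := by positivity
  set S : Set ℝ := {r : ℝ | ∃ w : Fin N → ℝ, {i | w i ≠ 0}.ncard ≤ 2 * n ∧ r = normV (v - w)}
  have hne : S.Nonempty := ⟨normV v, 0, by simp, by simp⟩
  have key : ∀ r ∈ S, normV v / (1 + α * μ) ≤ r := by
    rintro r ⟨w, hw, rfl⟩
    rw [div_le_iff₀ hpos]
    have h1 : normV v ≤ normV (v - w) + normV w := by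
      have := hVadd (v - w) w
      simpa using this
    have hZneg : Z (Φ.mulVec w) = Z (Φ.mulVec (v - w)) := by
      have : Φ.mulVec w = (-1 : ℝ) • Φ.mulVec (v - w) := by
        rw [Matrix.mulVec_sub, hv]
        simp
      rw [this, hZsmul]; simp
    have h2 : normV w ≤ μ * (α * normV (v - w)) := by
      calc normV w ≤ μ * Z (Φ.mulVec w) := hIS w hw
        _ = μ * Z (Φ.mulVec (v - w)) := by rw [hZneg]
        _ ≤ μ * (α * normV (v - w)) := by
            exact mul_le_mul_of_nonneg_left (hS (v - w)) hμ.le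
    nlinarith
  have hlb : normV v / (1 + α * μ) ≤ sInf S := le_csInf hne key
  have : normV v / (1 + α * μ) ≤ bestTermErr normV (2 * n) v := hlb
  calc normV v = (1 + α * μ) * (normV v / (1 + α * μ)) := by field_simp
    _ ≤ (1 + α * μ) * bestTermErr normV (2 * n) v := by
        exact mul_le_mul_of_nonneg_left this hpos.le

end
end

section
/- Let Φ be an m×N matrix with null space property NSP(2n,C₁) in norm ‖·‖_V, and let ‖z‖_W = min{Φv = z, ‖v‖_V} be the quotient norm on ℝ^m. Then ‖Φu‖_W ≤ ‖u‖_V for all u (so α_W = 1), and ‖v‖_V ≤ (1+C₁)‖Φv‖_W for every 2n-sparse vector v (so IS(2n, 1+C₁) holds in the W-norm). -/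
noncomputable section

/-- The quotient (Riesz) norm `‖z‖_W = min {‖v‖_V : Φv = z}` on `ℝ^m`. -/
def quotNorm {m N : ℕ} (Φ : Matrix (Fin m) (Fin N) ℝ) (normV : (Fin N → ℝ) → ℝ)
    (z : Fin m → ℝ) : ℝ :=
  sInf {r : ℝ | ∃ v : Fin N → ℝ, Φ.mulVec v = z ∧ r = normV v}

/-- **The null space property implies stability and inverse stability in the quotient
norm** (second half of Theorem 6.2): if `Φ` satisfies `NSP(2n, C₁)` then, with
`‖·‖_W` the quotient norm, `‖Φu‖_W ≤ ‖u‖_V` for all `u` (so `α_W = 1`), and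
`‖v‖_V ≤ (1 + C₁)‖Φv‖_W` for every `2n`-sparse `v` (so `IS(2n, 1 + C₁)` holds). -/
theorem null_space_property_implies_stability
    {m N : ℕ} (Φ : Matrix (Fin m) (Fin N) ℝ) (n : ℕ)
    (normV : (Fin N → ℝ) → ℝ)
    (hVadd : ∀ x y, normV (x + y) ≤ normV x + normV y)
    (hVsmul : ∀ (a : ℝ) x, normV (a • x) = |a| * normV x)
    (hVdef : ∀ x, normV x = 0 ↔ x = 0)
    (C₁ : ℝ) (hC₁ : 0 < C₁)
    (hNSP : ∀ v : Fin N → ℝ, Φ.mulVec v = 0 →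
      normV v ≤ C₁ * bestTermErr normV (2 * n) v) :
    (∀ u : Fin N → ℝ, quotNorm Φ normV (Φ.mulVec u) ≤ normV u) ∧
    (∀ v : Fin N → ℝ, {i | v i ≠ 0}.ncard ≤ 2 * n →
      normV v ≤ (1 + C₁) * quotNorm Φ normV (Φ.mulVec v)) := by
  have hnonneg : ∀ x, 0 ≤ normV x := by
    intro x
    have hneg : normV (-x) = normV x := by
      have := hVsmul (-1) x
      simpa using this
    have h0 : normV (0 : Fin N → ℝ) = 0 := (hVdef 0).mpr rfl
    have := hVadd x (-x)
    simp only [add_neg_cancel, h0, hneg] at this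
    linarith
  have hbdd : ∀ z, BddBelow {r : ℝ | ∃ v : Fin N → ℝ, Φ.mulVec v = z ∧ r = normV v} := by
    intro z
    exact ⟨0, fun r ⟨v, _, hr⟩ => hr ▸ hnonneg v⟩
  constructor
  · intro u
    exact csInf_le (hbdd _) ⟨u, rfl, rfl⟩
  · intro v hv
    have key : ∀ w : Fin N → ℝ, Φ.mulVec w = Φ.mulVec v → normV v ≤ (1 + C₁) * normV w := by
      intro w hw
      have hker : Φ.mulVec (v - w) = 0 := by
        rw [Matrix.mulVec_sub, hw, sub_self]
      have h1 : normV (v - w) ≤ C₁ * bestTermErr normV (2 * n) (v - w) := hNSP _ hker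
      have h2 : bestTermErr normV (2 * n) (v - w) ≤ normV w := by
        have hmem : normV ((v - w) - v) ∈
            {r : ℝ | ∃ u : Fin N → ℝ, {i | u i ≠ 0}.ncard ≤ 2 * n ∧ r = normV ((v - w) - u)} :=
          ⟨v, hv, rfl⟩
        have hbb : BddBelow {r : ℝ | ∃ u : Fin N → ℝ, {i | u i ≠ 0}.ncard ≤ 2 * n ∧
            r = normV ((v - w) - u)} := ⟨0, fun r ⟨u, _, hr⟩ => hr ▸ hnonneg _⟩
        have := csInf_le hbb hmem
        have heq : (v - w) - v = (-1 : ℝ) • w := by funext i; simp [sub_eq_add_neg]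
        rw [heq, hVsmul] at this
        simpa [bestTermErr] using this
      have h3 : normV v ≤ normV (v - w) + normV w := by
        have := hVadd (v - w) w
        simpa using this
      nlinarith [hnonneg w]
    rcases le_or_gt (normV v) 0 with h | h
    · have : (0:ℝ) ≤ (1 + C₁) * quotNorm Φ normV (Φ.mulVec v) := by
        have : 0 ≤ quotNorm Φ normV (Φ.mulVec v) :=
          le_csInf ⟨normV v, v, rfl, rfl⟩ (fun r ⟨u, _, hr⟩ => hr ▸ hnonneg u)
        positivity
      linarith
    · have hpos : (0:ℝ) < 1 + C₁ := by linarith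
      rw [quotNorm, ← div_le_iff₀' hpos] at *
      exact le_csInf ⟨normV v, v, rfl, rfl⟩ (fun r ⟨u, hu, hr⟩ => by
        rw [div_le_iff₀' hpos, hr]; exact key u hu)

end
end
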